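/- Let n ≥ 1, let R ⊆ [n]×[n] and let C_k(i,j) ∈ ℤ be given for all i,j,k ∈ [n], with not all of C_1(i,j),…,C_n(i,j) zero for each (i,j) ∈ R. If the associated linear system L(R,{C_k(i,j)}) is not partition regular, then the exponential system E(R,{C_k(i,j)}) is not partition regular: there exists a finite colouring f : ℕ → X admitting no X_1,…,X_n,Y_1,…,Y_n ∈ ℕ, all > 1 and all of the same colour under f, with (X_i : ℝ)^(∏_{k=1}^n (Y_k : ℝ)^{C_k(i,j)}) = X_j for every (i,j) ∈ R. -/

import Mathlib

open Finset

def IsLinSolution (n : ℕ) (R : Set (Fin n × Fin n)) (C : Fin n → Fin n → Fin n → ℤ)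
    (z : Fin n → ℕ) : Prop :=
  (∀ i, 0 < z i) ∧
    ∃ κ : Fin n → ℤ, ∀ i j, (i, j) ∈ R →
      κ j - κ i = ∑ m, C m i j * (z m : ℤ)

def LinPartitionRegular (n : ℕ) (R : Set (Fin n × Fin n))
    (C : Fin n → Fin n → Fin n → ℤ) : Prop :=
  ∀ (X : Type) [Finite X] (f : ℕ → X),
    ∃ z : Fin n → ℕ, IsLinSolution n R C z ∧ ∃ c : X, ∀ i, f (z i) = c

noncomputable def fIdx (K : ℕ) (hK : 0 < K) (x : ℝ) : Fin K :=
  ⟨(⌊(K : ℝ) * Int.fract x⌋).toNat % K, Nat.mod_lt _ hK⟩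

lemma fIdx_eq {K : ℕ} (hK : 0 < K) {a b : ℝ} (h : fIdx K hK a = fIdx K hK b) :
    |Int.fract a - Int.fract b| < 1 / K := by
  have hKR : (0:ℝ) < K := by exact_mod_cast hK
  have bnd : ∀ x : ℝ, 0 ≤ ⌊(K : ℝ) * Int.fract x⌋ ∧ ⌊(K : ℝ) * Int.fract x⌋ < K := by
    intro x
    constructor
    · exact Int.floor_nonneg.2 (mul_nonneg hKR.le (Int.fract_nonneg _))
    · refine Int.floor_lt.2 ?_
      push_cast
      nlinarith [Int.fract_lt_one x, Int.fract_nonneg x]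
  have hfl : ⌊(K : ℝ) * Int.fract a⌋ = ⌊(K : ℝ) * Int.fract b⌋ := by
    have h' := congrArg Fin.val h
    simp only [fIdx] at h'
    have ha := bnd a; have hb := bnd b
    have ha' : (⌊(K : ℝ) * Int.fract a⌋).toNat < K := by omega
    have hb' : (⌊(K : ℝ) * Int.fract b⌋).toNat < K := by omega
    rw [Nat.mod_eq_of_lt ha', Nat.mod_eq_of_lt hb'] at h'
    omega
  have h1 : (K : ℝ) * |Int.fract a - Int.fract b| < 1 := by
    have la := Int.floor_le ((K : ℝ) * Int.fract a)
    have lb := Int.floor_le ((K : ℝ) * Int.fract b)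
    have ua := Int.lt_floor_add_one ((K : ℝ) * Int.fract a)
    have ub := Int.lt_floor_add_one ((K : ℝ) * Int.fract b)
    rw [hfl] at la ua
    rcases abs_cases (Int.fract a - Int.fract b) with h2 | h2 <;>
      rw [h2.1] <;> nlinarith
  rw [lt_div_iff₀ hKR]
  nlinarith

theorem exp_system_not_partition_regular_of_not_lin (n : ℕ) (hn : 1 ≤ n)
    (R : Set (Fin n × Fin n)) (C : Fin n → Fin n → Fin n → ℤ)
    (hC : ∀ i j, (i, j) ∈ R → ∃ k, C k i j ≠ 0)
    (hL : ¬ LinPartitionRegular n R C) :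
    ∃ (X : Type) (_ : Finite X) (f : ℕ → X),
      ¬ ∃ x y : Fin n → ℕ, (∀ i, 1 < x i) ∧ (∀ i, 1 < y i) ∧
        (∃ c : X, (∀ i, f (x i) = c) ∧ (∀ i, f (y i) = c)) ∧
        ∀ i j, (i, j) ∈ R →
          (x i : ℝ) ^ (∏ k, (y k : ℝ) ^ (C k i j)) = (x j : ℝ) := by
  classical
  rw [LinPartitionRegular] at hL
  push_neg at hL
  obtain ⟨Xg, instg, g, hg⟩ := hL
  haveI : Finite Xg := instg
  obtain ⟨B, hBdef⟩ : ∃ B : ℕ, B = ∑ i : Fin n, ∑ j : Fin n, ∑ k : Fin n, (C k i j).natAbs :=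
    ⟨_, rfl⟩
  obtain ⟨N₀, hN0def⟩ : ∃ m : ℕ, m = 4 * (B + 1) := ⟨_, rfl⟩
  obtain ⟨K, hKdef⟩ : ∃ m : ℕ, m = 8 * (B + 1) * N₀ := ⟨_, rfl⟩
  have hN0pos : 0 < N₀ := by omega
  have hKpos : 0 < K := by rw [hKdef]; positivity
  refine ⟨Fin K × (Fin N₀ → Fin K) × (Fin N₀ → Xg), inferInstance,
    fun m => (fIdx K hKpos (Real.log m),
      fun N => fIdx K hKpos (((N.1 + 1 : ℕ) : ℝ) * Real.log (Real.log m)),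
      fun N => g (round (((N.1 + 1 : ℕ) : ℝ) * Real.log m)).toNat), ?_⟩
  rintro ⟨x, y, hx, hy, ⟨c, hcx, hcy⟩, hRel⟩
  -- basic positivity facts
  have hlog2 : (0.6931:ℝ) < Real.log 2 := by
    have := Real.log_two_gt_d9; linarith
  have hx2 : ∀ i, (2:ℝ) ≤ (x i : ℝ) := fun i => by exact_mod_cast hx i
  have hy2 : ∀ i, (2:ℝ) ≤ (y i : ℝ) := fun i => by exact_mod_cast hy i
  have hxpos : ∀ i, (0:ℝ) < (x i : ℝ) := fun i => lt_of_lt_of_le two_pos (hx2 i)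
  have hypos : ∀ i, (0:ℝ) < (y i : ℝ) := fun i => lt_of_lt_of_le two_pos (hy2 i)
  have hlx : ∀ i, Real.log 2 ≤ Real.log (x i) := fun i =>
    Real.log_le_log two_pos (hx2 i)
  have hly : ∀ i, Real.log 2 ≤ Real.log (y i) := fun i =>
    Real.log_le_log two_pos (hy2 i)
  have hlxpos : ∀ i, (0:ℝ) < Real.log (x i) := fun i => by linarith [hlx i]
  have hlypos : ∀ i, (0:ℝ) < Real.log (y i) := fun i => by linarith [hly i]
  -- the key real identity
  have key : ∀ i j, (i, j) ∈ R → Real.log (Real.log (x j)) =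
      Real.log (Real.log (x i)) + ∑ k, (C k i j : ℝ) * Real.log (y k) := by
    intro i j hij
    have hE : (0:ℝ) < ∏ k, (y k : ℝ) ^ (C k i j) :=
      Finset.prod_pos fun k _ => zpow_pos (hypos k) _
    have h1 : Real.log ((x j : ℝ)) = (∏ k, (y k : ℝ) ^ (C k i j)) * Real.log (x i) := by
      rw [← hRel i j hij, Real.log_rpow (hxpos i)]
    rw [h1, Real.log_mul (ne_of_gt hE) (ne_of_gt (hlxpos i)),
      Real.log_prod (fun k _ => ne_of_gt (zpow_pos (hypos k) _))]
    simp only [Real.log_zpow]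
    ring
  -- Dirichlet approximation
  obtain ⟨P, NZ, hNZ0, hNZle, hDir⟩ :=
    Real.exists_int_int_abs_mul_sub_le (Int.fract (Real.log (y ⟨0, hn⟩))) hN0pos
  obtain ⟨N, hNdef⟩ : ∃ m : ℕ, (m : ℤ) = NZ := ⟨NZ.toNat, Int.toNat_of_nonneg hNZ0.le⟩
  have hN1 : 1 ≤ N := by omega
  have hNle : N ≤ N₀ := by omega
  have hNZcast : ((NZ : ℤ) : ℝ) = (N : ℝ) := by rw [← hNdef]; push_cast; ring
  obtain ⟨idx, hidxval⟩ : ∃ idx : Fin N₀, idx.1 + 1 = N :=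
    ⟨⟨N - 1, by omega⟩, by simp; omega⟩
  have hidxcast : ((idx.1 + 1 : ℕ) : ℝ) = (N : ℝ) := by rw [hidxval]
  -- colour components
  have hcy1 : ∀ k, fIdx K hKpos (Real.log (y k)) = c.1 := fun k =>
    congrArg Prod.fst (hcy k)
  have hcy3 : ∀ k, g (round ((N : ℝ) * Real.log (y k))).toNat = c.2.2 idx := by
    intro k
    have h : g (round (((idx.1 + 1 : ℕ) : ℝ) * Real.log (y k))).toNat = c.2.2 idx :=
      congrFun (congrArg (fun p => p.2.2) (hcy k)) idx
    rwa [hidxcast] at h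
  have hcx2 : ∀ i, fIdx K hKpos ((N : ℝ) * Real.log (Real.log (x i))) = c.2.1 idx := by
    intro i
    have h : fIdx K hKpos (((idx.1 + 1 : ℕ) : ℝ) * Real.log (Real.log (x i))) = c.2.1 idx :=
      congrFun (congrArg (fun p => p.2.1) (hcx i)) idx
    rwa [hidxcast] at h
  -- the integer candidates
  have hZ1 : ∀ m, 1 ≤ round ((N : ℝ) * Real.log (y m)) := by
    intro m
    have hN1' : (1:ℝ) ≤ (N : ℝ) := by exact_mod_cast hN1
    have h1 : (1/2 : ℝ) < (N : ℝ) * Real.log (y m) := by nlinarith [hly m]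
    have h2 := abs_sub_round ((N : ℝ) * Real.log (y m))
    rw [abs_le] at h2
    have h3 : (0:ℝ) < ((round ((N : ℝ) * Real.log (y m)) : ℤ) : ℝ) := by linarith [h2.2]
    have h4 : (0:ℤ) < round ((N : ℝ) * Real.log (y m)) := by exact_mod_cast h3
    omega
  obtain ⟨z, hzZ⟩ : ∃ z : Fin n → ℕ, ∀ m, ((z m : ℕ) : ℤ) = round ((N : ℝ) * Real.log (y m)) :=
    ⟨fun m => (round ((N : ℝ) * Real.log (y m))).toNat,
      fun m => Int.toNat_of_nonneg (le_trans (by norm_num) (hZ1 m))⟩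
  have hzR : ∀ m, ((z m : ℕ) : ℝ) = ((round ((N : ℝ) * Real.log (y m)) : ℤ) : ℝ) := by
    intro m; exact_mod_cast congrArg (fun t : ℤ => (t : ℝ)) (hzZ m)
  have hzpos : ∀ m, 0 < z m := by
    intro m; have h1 := hZ1 m; have h2 := hzZ m; omega
  -- fract of log y within 1/K of each other
  have hfr : ∀ k, |Int.fract (Real.log (y k)) - Int.fract (Real.log (y ⟨0, hn⟩))| <
      1 / (K : ℝ) := fun k => fIdx_eq hKpos (by rw [hcy1 k, hcy1 _])
  -- rounding error bound
  have hs : ∀ k, |(N : ℝ) * Real.log (y k) - ((round ((N : ℝ) * Real.log (y k)) : ℤ) : ℝ)| ≤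
      1 / ((N₀ : ℝ) + 1) + (N : ℝ) / (K : ℝ) := by
    intro k
    have h1 : |(N : ℝ) * Real.log (y k) -
        (((N : ℤ) * ⌊Real.log (y k)⌋ + P : ℤ) : ℝ)| ≤ 1 / ((N₀ : ℝ) + 1) + (N : ℝ) / (K : ℝ) := by
      have e : (N : ℝ) * Real.log (y k) - (((N : ℤ) * ⌊Real.log (y k)⌋ + P : ℤ) : ℝ) =
          ((NZ : ℝ) * Int.fract (Real.log (y ⟨0, hn⟩)) - (P : ℝ)) +
          (N : ℝ) * (Int.fract (Real.log (y k)) - Int.fract (Real.log (y ⟨0, hn⟩))) := by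
        simp only [Int.fract]
        push_cast
        rw [hNZcast]
        ring
      rw [e]
      refine (abs_add_le _ _).trans (add_le_add hDir ?_)
      rw [abs_mul, abs_of_nonneg (by positivity : (0:ℝ) ≤ (N : ℝ))]
      calc (N : ℝ) * |Int.fract (Real.log (y k)) - Int.fract (Real.log (y ⟨0, hn⟩))|
          ≤ (N : ℝ) * (1 / (K : ℝ)) :=
            mul_le_mul_of_nonneg_left (hfr k).le (by positivity)
        _ = (N : ℝ) / (K : ℝ) := by ring
    exact (round_le ((N : ℝ) * Real.log (y k)) _).trans h1
  -- ∑ |C| ≤ B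
  have natB : ∀ i j, (∑ m, (C m i j).natAbs) ≤ B := by
    intro i j
    rw [hBdef]
    calc ∑ m, (C m i j).natAbs
        ≤ ∑ j' : Fin n, ∑ m, (C m i j').natAbs :=
          single_le_sum (f := fun j' => ∑ m, (C m i j').natAbs)
            (fun _ _ => Nat.zero_le _) (mem_univ j)
      _ ≤ _ := single_le_sum (f := fun i' => ∑ j' : Fin n, ∑ m, (C m i' j').natAbs)
            (fun _ _ => Nat.zero_le _) (mem_univ i)
  have hCB : ∀ i j, (∑ m, |(C m i j : ℝ)|) ≤ (B : ℝ) := by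
    intro i j
    have e : ∑ m, |(C m i j : ℝ)| = ((∑ m, (C m i j).natAbs : ℕ) : ℝ) := by
      rw [Nat.cast_sum]
      refine sum_congr rfl fun m _ => ?_
      rw [Nat.cast_natAbs]
      exact Int.cast_abs.symm
    rw [e]
    exact_mod_cast natB i j
  -- the numeric bound
  have hKR : (0:ℝ) < (K : ℝ) := by exact_mod_cast hKpos
  have hKRe : (K : ℝ) = 8 * ((B:ℝ) + 1) * (4 * ((B:ℝ) + 1)) := by
    rw [hKdef, hN0def]; push_cast; ring
  have hN0Re : (N₀ : ℝ) = 4 * ((B:ℝ) + 1) := by rw [hN0def]; push_cast; ring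
  have hNRle : (N : ℝ) ≤ (N₀ : ℝ) := by exact_mod_cast hNle
  have hBR : (0:ℝ) ≤ (B : ℝ) := Nat.cast_nonneg _
  have hbound : 1 / (K : ℝ) + (B : ℝ) * (1 / ((N₀ : ℝ) + 1) + (N : ℝ) / (K : ℝ)) < 1 := by
    have h1 : 1 / (K : ℝ) ≤ 1 / 4 := by
      apply one_div_le_one_div_of_le (by norm_num)
      rw [hKRe]; nlinarith
    have h2 : (B : ℝ) * (1 / ((N₀ : ℝ) + 1)) ≤ 1 / 4 := by
      rw [mul_one_div, div_le_div_iff₀ (by positivity) (by norm_num)]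
      rw [hN0Re]; nlinarith
    have h3 : (B : ℝ) * ((N : ℝ) / (K : ℝ)) ≤ 1 / 4 := by
      rw [mul_div_assoc', div_le_div_iff₀ hKR (by norm_num)]
      have hNR0 : (0:ℝ) ≤ (N : ℝ) := Nat.cast_nonneg _
      nlinarith [hNRle, hN0Re, hKRe]
    nlinarith
  -- the linear system is satisfied
  obtain ⟨κ, hκdef⟩ : ∃ κ : Fin n → ℤ, ∀ i, κ i = ⌊(N : ℝ) * Real.log (Real.log (x i))⌋ :=
    ⟨_, fun _ => rfl⟩
  have main : ∀ i j, (i, j) ∈ R → κ j - κ i = ∑ m, C m i j * ((z m : ℕ) : ℤ) := by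
    intro i j hij
    have keyN : (N : ℝ) * Real.log (Real.log (x j)) - (N : ℝ) * Real.log (Real.log (x i)) =
        ∑ m, (C m i j : ℝ) * ((N : ℝ) * Real.log (y m)) := by
      rw [key i j hij, mul_add, add_sub_cancel_left, Finset.mul_sum]
      exact sum_congr rfl fun m _ => by ring
    obtain ⟨D, hDdef⟩ : ∃ D : ℤ, D = κ j - κ i - ∑ m, C m i j * ((z m : ℕ) : ℤ) := ⟨_, rfl⟩
    have hDcast : (D : ℝ) =
        (Int.fract ((N : ℝ) * Real.log (Real.log (x i))) -
         Int.fract ((N : ℝ) * Real.log (Real.log (x j)))) +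
        ∑ m, (C m i j : ℝ) * ((N : ℝ) * Real.log (y m) -
          ((round ((N : ℝ) * Real.log (y m)) : ℤ) : ℝ)) := by
      have split : ∑ m, (C m i j : ℝ) * ((N : ℝ) * Real.log (y m) -
            ((round ((N : ℝ) * Real.log (y m)) : ℤ) : ℝ)) =
          (∑ m, (C m i j : ℝ) * ((N : ℝ) * Real.log (y m))) -
          ∑ m, (C m i j : ℝ) * ((round ((N : ℝ) * Real.log (y m)) : ℤ) : ℝ) := by
        rw [← Finset.sum_sub_distrib]
        exact sum_congr rfl fun m _ => by ring
      rw [split, ← keyN, hDdef, hκdef, hκdef]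
      simp only [Int.fract]
      push_cast [hzZ]
      ring
    have hfru : |Int.fract ((N : ℝ) * Real.log (Real.log (x i))) -
        Int.fract ((N : ℝ) * Real.log (Real.log (x j)))| < 1 / (K : ℝ) :=
      fIdx_eq hKpos (by rw [hcx2 i, hcx2 j])
    have hsum : |∑ m, (C m i j : ℝ) * ((N : ℝ) * Real.log (y m) -
          ((round ((N : ℝ) * Real.log (y m)) : ℤ) : ℝ))| ≤
        (B : ℝ) * (1 / ((N₀ : ℝ) + 1) + (N : ℝ) / (K : ℝ)) := by
      calc |∑ m, (C m i j : ℝ) * ((N : ℝ) * Real.log (y m) -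
              ((round ((N : ℝ) * Real.log (y m)) : ℤ) : ℝ))|
          ≤ ∑ m, |(C m i j : ℝ) * ((N : ℝ) * Real.log (y m) -
              ((round ((N : ℝ) * Real.log (y m)) : ℤ) : ℝ))| :=
            Finset.abs_sum_le_sum_abs _ _
        _ ≤ ∑ m, |(C m i j : ℝ)| * (1 / ((N₀ : ℝ) + 1) + (N : ℝ) / (K : ℝ)) := by
            refine sum_le_sum fun m _ => ?_
            rw [abs_mul]
            exact mul_le_mul_of_nonneg_left (hs m) (abs_nonneg _)
        _ = (∑ m, |(C m i j : ℝ)|) * (1 / ((N₀ : ℝ) + 1) + (N : ℝ) / (K : ℝ)) := by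
            rw [Finset.sum_mul]
        _ ≤ (B : ℝ) * (1 / ((N₀ : ℝ) + 1) + (N : ℝ) / (K : ℝ)) := by
            refine mul_le_mul_of_nonneg_right (hCB i j) ?_
            positivity
    have hDlt : |(D : ℝ)| < 1 := by
      rw [hDcast]
      calc |_ + _| ≤ _ + _ := abs_add_le _ _
        _ ≤ 1 / (K : ℝ) + (B : ℝ) * (1 / ((N₀ : ℝ) + 1) + (N : ℝ) / (K : ℝ)) :=
            add_le_add hfru.le hsum
        _ < 1 := hbound
    have hDz : |D| < 1 := by exact_mod_cast hDlt
    have hD0 : D = 0 := by rw [abs_lt] at hDz; omega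
    rw [hDdef] at hD0
    omega
  obtain ⟨k0, hk0⟩ := hg z ⟨hzpos, κ, main⟩ (c.2.2 idx)
  have hzval : z k0 = (round ((N : ℝ) * Real.log (y k0))).toNat := by
    have := hzZ k0; omega
  rw [hzval] at hk0
  exact hk0 (hcy3 k0)
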